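/- Let S = {s_1,...,s_n} ⊆ F_{q^t} with the skew Vandermonde matrix V_θ(s_1,...,s_n) = (N_i(s_j))_{0 ≤ i ≤ n−1, 1 ≤ j ≤ n} of full rank n, let v_1,...,v_n ∈ F_{q^t}^*, and let k ≤ n. Then the generalized skew Reed–Solomon code GSRS_k(S, v) = {(v_1 f(s_1), ..., v_n f(s_n)) : f ∈ F_{q^t}[X;θ], deg f < k} has dimension k and minimum Hamming distance exactly n − k + 1; i.e., it is MDS. -/

import Mathlib

open Finset

set_option linter.unusedSectionVars false
set_option linter.unusedVariables false
set_option maxHeartbeats 1000000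

section Skew
variable {F : Type} [Field F] (θ : F ≃+* F)

/-- partial norm -/
def Nf (i : ℕ) (a : F) : F := ∏ u ∈ range i, (θ ^ u) a

/-- skew evaluation of coefficient function `f` truncated at degree `< m` -/
def Ev (f : ℕ → F) (m : ℕ) (a : F) : F := ∑ i ∈ range m, f i * Nf θ i a

lemma Nf_zero (a : F) : Nf θ 0 a = 1 := by simp [Nf]

lemma Nf_succ_top (i : ℕ) (a : F) : Nf θ (i+1) a = Nf θ i a * (θ ^ i) a := by
  simp [Nf, prod_range_succ]

lemma pow_apply_succ (u : ℕ) (x : F) : (θ ^ (u+1)) x = θ ((θ ^ u) x) := by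
  rw [pow_succ']; rfl

lemma pow_apply_succ' (u : ℕ) (x : F) : (θ ^ (u+1)) x = (θ ^ u) (θ x) := by
  rw [pow_succ]; rfl

lemma Nf_succ_bot (i : ℕ) (a : F) : Nf θ (i+1) a = a * θ (Nf θ i a) := by
  rw [Nf, prod_range_succ']
  simp only [pow_apply_succ, pow_zero]
  rw [← map_prod]
  show (θ (∏ x ∈ range i, (θ ^ x) a)) * (1 : F ≃+* F) a = a * θ (Nf θ i a)
  rw [Nf]
  show (θ (∏ x ∈ range i, (θ ^ x) a)) * a = a * θ (∏ x ∈ range i, (θ ^ x) a)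
  ring

lemma Nf_mul (i : ℕ) (a b : F) : Nf θ i (a * b) = Nf θ i a * Nf θ i b := by
  simp [Nf, map_mul, prod_mul_distrib]

lemma Nf_ne_zero (i : ℕ) (a : F) (ha : a ≠ 0) : Nf θ i a ≠ 0 := by
  rw [Nf]
  exact prod_ne_zero_iff.mpr fun u _ => by
    simpa using (map_ne_zero_iff _ (θ ^ u).injective).mpr ha

lemma tele (c : F) (hc : c ≠ 0) (i : ℕ) : (θ ^ i) c = c * Nf θ i (θ c * c⁻¹) := by
  induction i with
  | zero => show (1 : F ≃+* F) c = c * Nf θ 0 (θ c * c⁻¹); rw [Nf_zero]; simp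
  | succ i ih =>
    rw [Nf_succ_top, ← mul_assoc, ← ih, map_mul, map_inv₀, pow_apply_succ,
      ← mul_assoc, mul_right_comm, mul_inv_cancel₀ (by
        simpa using (map_ne_zero_iff _ (θ ^ i).injective).mpr hc), one_mul, ← pow_apply_succ, pow_apply_succ']
lemma Ev_congr (f : ℕ → F) (m m' : ℕ) (hm : m ≤ m') (hf : ∀ i, m ≤ i → f i = 0) (a : F) :
    Ev θ f m' a = Ev θ f m a := by
  rw [Ev, Ev]
  exact (sum_subset (range_subset_range.mpr hm) (fun i _ hi => by
    rw [hf i (by simpa using hi), zero_mul])).symm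

/-- right multiplication by `(X - b)` in the skew polynomial ring, on coefficients -/
def rX (b : F) (g : ℕ → F) : ℕ → F :=
  fun i => (if i = 0 then 0 else g (i-1)) - g i * (θ ^ i) b

/-- left multiplication by `(X - τ)` -/
def lX (τ : F) (g : ℕ → F) : ℕ → F :=
  fun i => (if i = 0 then 0 else θ (g (i-1))) - τ * g i

lemma Nf_key (i : ℕ) (a b : F) :
    Nf θ (i+1) a - (θ ^ i) b * Nf θ i a
      = (a - b) * Nf θ i (a * (θ (a-b) * (a-b)⁻¹)) := by
  by_cases h : a = b
  · subst h
    simp [Nf_succ_top, mul_comm]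
  · have hc : a - b ≠ 0 := sub_ne_zero.mpr h
    rw [Nf_mul, ← mul_assoc, mul_comm (a-b) (Nf θ i a), mul_assoc, ← tele θ _ hc i,
      Nf_succ_top, map_sub]
    ring

lemma Ev_rX (g : ℕ → F) (b a : F) (m : ℕ) (hg : g m = 0) :
    Ev θ (rX θ b g) (m+1) a = (a - b) * Ev θ g m (a * (θ (a-b) * (a-b)⁻¹)) := by
  rw [Ev, Ev]
  simp only [rX, sub_mul]
  rw [sum_sub_distrib, sum_range_succ', sum_range_succ, hg]
  simp only [Nat.succ_ne_zero, if_false, if_pos rfl, if_true, ite_true, Nat.succ_sub_one,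
    zero_mul, add_zero]
  rw [← sum_sub_distrib, ← sub_mul, mul_sum]
  refine sum_congr rfl fun x hx => ?_
  have h := Nf_key θ x a b
  linear_combination (g x) * h

lemma Ev_lX (g : ℕ → F) (τ a : F) (m : ℕ) (hg : g m = 0) :
    Ev θ (lX θ τ g) (m+1) a = a * θ (Ev θ g m a) - τ * Ev θ g m a := by
  rw [Ev, Ev]
  simp only [lX, sub_mul]
  rw [sum_sub_distrib, sum_range_succ', sum_range_succ, hg]
  simp only [Nat.succ_ne_zero, if_false, if_pos rfl, if_true, ite_true, Nat.succ_sub_one,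
    zero_mul, add_zero, map_zero, mul_zero]
  congr 1
  · rw [map_sum, mul_sum]
    refine sum_congr rfl fun x hx => ?_
    rw [Nf_succ_bot, map_mul]
    ring
  · rw [mul_sum]
    exact sum_congr rfl fun x hx => by ring
lemma factor (d : ℕ) (f : ℕ → F) (hf : ∀ i, d+1 < i → f i = 0) (s0 : F)
    (h0 : Ev θ f (d+2) s0 = 0) :
    ∃ g : ℕ → F, (∀ i, d < i → g i = 0) ∧ f = rX θ s0 g := by
  classical
  set D := d + 1 with hD
  let h : ℕ → F := fun j =>
    Nat.rec (motive := fun _ => F) 0 (fun j hj => f (D - j) + hj * (θ ^ (D - j)) s0) j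
  let g : ℕ → F := fun i => if i < D then h (D - i) else 0
  have hg : ∀ i, d < i → g i = 0 := fun i hi => by
    simp only [g, if_neg (by omega : ¬ i < D)]
  have key : ∀ i, g i = f (i+1) + g (i+1) * (θ ^ (i+1)) s0 := by
    intro i
    by_cases hi : i < D
    · have e0 : D - i = (D - i - 1) + 1 := by omega
      have e1 : D - (D - i - 1) = i + 1 := by omega
      have step : h ((D - i - 1) + 1)
          = f (D - (D - i - 1)) + h (D - i - 1) * (θ ^ (D - (D - i - 1))) s0 := rfl
      have e2 : g i = h (D - i) := by simp only [g, if_pos hi]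
      rw [e2, e0, step, e1]
      have hgh : h (D - i - 1) = g (i+1) := by
        by_cases hi1 : i + 1 < D
        · have e5 : D - (i+1) = D - i - 1 := by omega
          simp only [g, if_pos hi1, e5]
        · have h1 : D - i - 1 = 0 := by omega
          simp only [g, if_neg hi1, h1]
          rfl
      rw [hgh]
    · have e2 : g i = 0 := by simp only [g, if_neg hi]
      have e3 : g (i+1) = 0 := by simp only [g, if_neg (by omega : ¬ i + 1 < D)]
      have e4 : f (i+1) = 0 := hf _ (by omega)
      rw [e2, e3, e4]
      ring
  refine ⟨g, hg, ?_⟩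
  have hsame : ∀ m : ℕ, m ≠ 0 → rX θ s0 g m = f m := by
    intro m hm
    obtain ⟨m', rfl⟩ := Nat.exists_eq_succ_of_ne_zero hm
    show (if m' + 1 = 0 then (0:F) else g (m'+1-1)) - g (m'+1) * (θ ^ (m'+1)) s0 = f (m'+1)
    rw [if_neg (Nat.succ_ne_zero _), Nat.succ_sub_one, key m']
    ring
  have h0' : Ev θ (rX θ s0 g) (d+2) s0 = 0 := by
    rw [Ev_rX θ g s0 s0 (d+1) (hg (d+1) (by omega))]
    simp
  have e1 : Ev θ f (d+2) s0
      = ∑ x ∈ range (d+1), f (x+1) * Nf θ (x+1) s0 + f 0 * Nf θ 0 s0 := by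
    rw [Ev, sum_range_succ']
  have e2 : Ev θ (rX θ s0 g) (d+2) s0
      = ∑ x ∈ range (d+1), (rX θ s0 g) (x+1) * Nf θ (x+1) s0
        + (rX θ s0 g) 0 * Nf θ 0 s0 := by
    rw [Ev, sum_range_succ']
  have hsum : ∑ x ∈ range (d+1), f (x+1) * Nf θ (x+1) s0
      = ∑ x ∈ range (d+1), (rX θ s0 g) (x+1) * Nf θ (x+1) s0 :=
    sum_congr rfl fun x _ => by rw [hsame (x+1) (Nat.succ_ne_zero _)]
  have hzero : f 0 = rX θ s0 g 0 := by
    have hA := h0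
    rw [e1, hsum] at hA
    have hB := h0'
    rw [e2] at hB
    simp only [Nf_zero, mul_one] at hA hB
    linear_combination hA - hB
  funext m
  by_cases hm : m = 0
  · rw [hm, hzero]
  · rw [← hsame m hm]
lemma indep_step {m : ℕ} (s : Fin (m+1) → F)
    (hs : LinearIndependent F (fun j : Fin (m+1) => fun i : Fin (m+1) => Nf θ (i:ℕ) (s j)))
    (j0 : Fin (m+1)) :
    LinearIndependent F (fun j : Fin m => fun i : Fin m =>
      Nf θ (i:ℕ) (s (j0.succAbove j) *
        (θ (s (j0.succAbove j) - s j0) * (s (j0.succAbove j) - s j0)⁻¹))) := by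
  classical
  set emb := j0.succAbove with hemb
  have hdist : ∀ j : Fin m, s (emb j) ≠ s j0 := by
    intro j hEq
    have : (fun i : Fin (m+1) => Nf θ (i:ℕ) (s (emb j)))
        = (fun i : Fin (m+1) => Nf θ (i:ℕ) (s j0)) := by
      funext i; rw [hEq]
    exact Fin.succAbove_ne j0 j (hs.injective this)
  set c : Fin m → F := fun j => s (emb j) - s j0 with hc
  have hcne : ∀ j, c j ≠ 0 := fun j => sub_ne_zero.mpr (hdist j)
  set s' : Fin m → F := fun j => s (emb j) * (θ (c j) * (c j)⁻¹) with hs'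
  rw [Fintype.linearIndependent_iff]
  intro lam hlam j
  -- evaluate hlam pointwise
  have hlam' : ∀ i : Fin m, ∑ j', lam j' * Nf θ (i:ℕ) (s' j') = 0 := by
    intro i
    have h2 := congrFun hlam i
    simp only [Finset.sum_apply, Pi.smul_apply, smul_eq_mul, Pi.zero_apply] at h2
    exact h2
  set w : Fin (m+1) → F := fun i => ∑ j', (lam j' * (c j')⁻¹) * Nf θ (i:ℕ) (s (emb j')) with hw
  have hstep : ∀ i : Fin m, w i.succ = (θ ^ (i:ℕ)) (s j0) * w i.castSucc := by
    intro i
    have expand : w i.succ - (θ ^ (i:ℕ)) (s j0) * w i.castSucc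
        = ∑ j', lam j' * Nf θ (i:ℕ) (s' j') := by
      rw [hw]
      simp only [Fin.val_succ, Fin.coe_castSucc, mul_sum]
      rw [← sum_sub_distrib]
      refine sum_congr rfl fun j' _ => ?_
      have hk := Nf_key θ (i:ℕ) (s (emb j')) (s j0)
      have : Nf θ ((i:ℕ)+1) (s (emb j')) - (θ ^ (i:ℕ)) (s j0) * Nf θ (i:ℕ) (s (emb j'))
          = c j' * Nf θ (i:ℕ) (s' j') := hk
      have hinv : (c j')⁻¹ * c j' = 1 := inv_mul_cancel₀ (hcne j')
      linear_combination (lam j' * (c j')⁻¹) * this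
        + (lam j' * Nf θ (i:ℕ) (s' j')) * hinv
    rw [hlam' i] at expand
    exact sub_eq_zero.mp expand
  have wconst : ∀ i : Fin (m+1), w i = w 0 * Nf θ (i:ℕ) (s j0) := by
    intro i
    induction i using Fin.induction with
    | zero => simp [Nf_zero]
    | succ i ih =>
      rw [hstep i, ih, Fin.val_succ, Fin.coe_castSucc, Nf_succ_top]
      ring
  set G : Fin (m+1) → F := fun j' =>
    (∑ j'' : Fin m, if emb j'' = j' then lam j'' * (c j'')⁻¹ else 0)
      - (if j' = j0 then w 0 else 0) with hG
  have hGemb : ∀ j'' : Fin m, G (emb j'') = lam j'' * (c j'')⁻¹ := by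
    intro j''
    have hiff : ∀ a : Fin m, (emb a = emb j'') ↔ a = j'' :=
      fun a => ⟨fun h => Fin.succAbove_right_injective h, fun h => by rw [h]⟩
    rw [hG]
    simp only [hiff, if_neg (Fin.succAbove_ne j0 j''), sub_zero]
    rw [Finset.sum_ite_eq' univ j'' (fun a => lam a * (c a)⁻¹)]
    simp
    exact fun h => absurd h (Fin.succAbove_ne j0 j'')
  have hGj0 : G j0 = - w 0 := by
    rw [hG]
    show (∑ j'' : Fin m, if emb j'' = j0 then lam j'' * (c j'')⁻¹ else 0)
      - (if j0 = j0 then w 0 else 0) = - w 0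
    rw [Finset.sum_eq_zero (fun a _ => if_neg (Fin.succAbove_ne j0 a)), zero_sub, if_pos rfl]
  have hGsum : ∑ j', G j' • (fun i : Fin (m+1) => Nf θ (i:ℕ) (s j')) = 0 := by
    rw [Fin.sum_univ_succAbove _ j0]
    funext i
    simp only [Pi.add_apply, Pi.smul_apply, Finset.sum_apply, smul_eq_mul, Pi.zero_apply,
      hGj0, hGemb]
    simp only [show ∀ x, G (j0.succAbove x) * Nf θ (i:ℕ) (s (j0.succAbove x))
      = lam x * (c x)⁻¹ * Nf θ (i:ℕ) (s (emb x)) from fun x => by rw [← hGemb x]]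
    have : ∑ j'' : Fin m, lam j'' * (c j'')⁻¹ * Nf θ (i:ℕ) (s (emb j'')) = w i := rfl
    rw [this, wconst i]
    ring
  have hzero := Fintype.linearIndependent_iff.mp hs G hGsum (emb j)
  rw [hGemb j] at hzero
  rcases mul_eq_zero.mp hzero with h | h
  · exact h
  · exact absurd h (inv_ne_zero (hcne j))
variable [DecidableEq F]

lemma crux : ∀ (d : ℕ) (n : ℕ) (s : Fin n → F),
    d < n →
    LinearIndependent F (fun j : Fin n => fun i : Fin n => Nf θ (i:ℕ) (s j)) →
    ∀ f : ℕ → F, (∀ i, d < i → f i = 0) → f ≠ 0 →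
    ((univ : Finset (Fin n)).filter (fun j => Ev θ f n (s j) = 0)).card ≤ d := by
  intro d
  induction d with
  | zero =>
    intro n s hdn hs f hsupp hfne
    have hf0 : f 0 ≠ 0 := by
      intro h
      apply hfne
      funext i
      rcases Nat.eq_zero_or_pos i with hi | hi
      · rw [hi, h]; rfl
      · exact hsupp i hi
    have hne : ∀ j, Ev θ f n (s j) ≠ 0 := by
      intro j
      rw [Ev_congr θ f 1 n hdn (fun i hi => hsupp i hi)]
      simp [Ev, Nf_zero, hf0]
    simp [Finset.filter_eq_empty_iff.mpr (fun j _ => hne j)]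
  | succ d ih =>
    intro n s hdn hs f hsupp hfne
    by_cases hex : ∃ j0 : Fin n, Ev θ f n (s j0) = 0
    · obtain ⟨j0, hj0⟩ := hex
      obtain ⟨m, rfl⟩ : ∃ m, n = m + 1 := ⟨n - 1, by omega⟩
      have hdm : d < m := by omega
      have h0 : Ev θ f (d+2) (s j0) = 0 := by
        rw [← Ev_congr θ f (d+2) (m+1) (by omega) (fun i hi => hsupp i (by omega))]
        exact hj0
      obtain ⟨g, hg, rfl⟩ := factor θ d f (fun i hi => hsupp i hi) (s j0) h0
      have hgne : g ≠ 0 := by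
        rintro rfl
        exact hfne (by funext i; simp [rX])
      set emb := j0.succAbove with hemb
      have hdist : ∀ j : Fin m, s (emb j) ≠ s j0 := by
        intro j hEq
        have : (fun i : Fin (m+1) => Nf θ (i:ℕ) (s (emb j)))
            = (fun i : Fin (m+1) => Nf θ (i:ℕ) (s j0)) := by
          funext i; rw [hEq]
        exact Fin.succAbove_ne j0 j (hs.injective this)
      set s' : Fin m → F := fun j =>
        s (emb j) * (θ (s (emb j) - s j0) * (s (emb j) - s j0)⁻¹) with hs'def
      have hs'li := indep_step θ s hs j0
      have hcard := ih m s' hdm hs'li g hg hgne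
      have hsub : (univ : Finset (Fin (m+1))).filter
            (fun j => Ev θ (rX θ (s j0) g) (m+1) (s j) = 0)
          ⊆ insert j0 (((univ : Finset (Fin m)).filter
            (fun j => Ev θ g m (s' j) = 0)).image emb) := by
        intro j' hj'
        rw [mem_filter] at hj'
        by_cases hj0' : j' = j0
        · rw [hj0']; exact mem_insert_self _ _
        · obtain ⟨j, rfl⟩ := Fin.exists_succAbove_eq hj0'
          refine mem_insert_of_mem (mem_image_of_mem emb (mem_filter.mpr ⟨mem_univ _, ?_⟩))
          have hrw := Ev_rX θ g (s j0) (s (emb j)) m (hg m hdm)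
          rw [hrw] at hj'
          rcases mul_eq_zero.mp hj'.2 with h | h
          · exact absurd (sub_eq_zero.mp h) (hdist j)
          · exact h
      calc ((univ : Finset (Fin (m+1))).filter
            (fun j => Ev θ (rX θ (s j0) g) (m+1) (s j) = 0)).card
          ≤ (insert j0 (((univ : Finset (Fin m)).filter
            (fun j => Ev θ g m (s' j) = 0)).image emb)).card := Finset.card_le_card hsub
        _ ≤ _ + 1 := Finset.card_insert_le _ _
        _ ≤ d + 1 := by
            have := Finset.card_image_le (f := emb)
              (s := (univ : Finset (Fin m)).filter (fun j => Ev θ g m (s' j) = 0))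
            omega
    · push_neg at hex
      rw [Finset.filter_eq_empty_iff.mpr (fun j _ => hex j)]
      simp
/-- iterated construction of a monic skew polynomial of degree `m`
vanishing at the first `m` points `sq 0, …, sq (m-1)` -/
def Pc (sq : ℕ → F) : ℕ → (ℕ → F)
  | 0 => fun i => if i = 0 then 1 else 0
  | (m+1) =>
      lX θ (sq m * θ (Ev θ (Pc sq m) (m+1) (sq m)) * (Ev θ (Pc sq m) (m+1) (sq m))⁻¹)
        (Pc sq m)

lemma Pc_supp (sq : ℕ → F) : ∀ m i, m < i → Pc θ sq m i = 0 := by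
  intro m
  induction m with
  | zero =>
    intro i hi
    show (if i = 0 then (1:F) else 0) = 0
    rw [if_neg (by omega)]
  | succ m ih =>
    intro i hi
    show lX θ _ (Pc θ sq m) i = 0
    rw [lX]
    rw [if_neg (by omega : ¬ i = 0), ih (i-1) (by omega), ih i (by omega), map_zero]
    ring

lemma Pc_monic (sq : ℕ → F) : ∀ m, Pc θ sq m m = 1 := by
  intro m
  induction m with
  | zero => simp [Pc]
  | succ m ih =>
    show lX θ _ (Pc θ sq m) (m+1) = 1
    rw [lX]
    rw [if_neg (by omega : ¬ m + 1 = 0), Nat.succ_sub_one, ih,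
      Pc_supp θ sq m (m+1) (by omega), map_one]
    ring

lemma Pc_vanish (sq : ℕ → F) : ∀ m j, j < m → Ev θ (Pc θ sq m) (m+1) (sq j) = 0 := by
  intro m
  induction m with
  | zero => omega
  | succ m ih =>
    intro j hj
    show Ev θ (lX θ _ (Pc θ sq m)) (m+1+1) (sq j) = 0
    rw [Ev_lX θ (Pc θ sq m) _ (sq j) (m+1) (Pc_supp θ sq m (m+1) (by omega))]
    rcases Nat.lt_or_ge j m with hjm | hjm
    · rw [ih j hjm, map_zero]
      ring
    · have hj' : j = m := by omega
      subst hj'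
      set E := Ev θ (Pc θ sq j) (j+1) (sq j) with hE
      by_cases hc : E = 0
      · rw [hc, map_zero]; ring
      · field_simp
        simp

end Skew

/-- Let `S = {s₁,…,sₙ} ⊆ F_{q^t}` with skew Vandermonde matrix
`V_θ = (N_i(s_j))_{0≤i≤n−1, 1≤j≤n}` of full rank `n` (where `N_i(a) = ∏_{u<i} θ^u(a)` are the
partial norms), let `v₁,…,vₙ ∈ F_{q^t}^*` and `0 < k ≤ n`. Then the generalized skew
Reed–Solomon code `GSRS_k(S,v) = {(v₁f(s₁),…,vₙf(sₙ)) : f ∈ F_{q^t}[X;θ], deg f < k}`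
(with skew evaluation `f(s) = ∑ fᵢ N_i(s)`) has dimension `k` and minimum Hamming distance
exactly `n − k + 1`; i.e. it is MDS. -/
theorem gsrs_is_mds (q t n k : ℕ) (F : Type) [Field F] [Fintype F] [DecidableEq F]
    (hF : Fintype.card F = q ^ t) (θ : F ≃+* F) (hθ : ∀ x : F, θ x = x ^ q)
    (s : Fin n → F)
    (hV : (Matrix.of fun (i j : Fin n) => ∏ u ∈ range (i : ℕ), (θ ^ u) (s j)).rank = n)
    (v : Fin n → F) (hv : ∀ j, v j ≠ 0) (hk : 0 < k) (hkn : k ≤ n) :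
    Module.finrank F
        (LinearMap.range (Matrix.mulVecLin
          (Matrix.of fun (j : Fin n) (i : Fin k) =>
            v j * ∏ u ∈ range (i : ℕ), (θ ^ u) (s j)))) = k ∧
      sInf {w | ∃ c ∈ LinearMap.range (Matrix.mulVecLin
          (Matrix.of fun (j : Fin n) (i : Fin k) =>
            v j * ∏ u ∈ range (i : ℕ), (θ ^ u) (s j))),
        c ≠ 0 ∧ hammingNorm c = w} = n - k + 1 := by
  classical
  set V : Matrix (Fin n) (Fin n) F :=
    Matrix.of fun (i j : Fin n) => ∏ u ∈ range (i : ℕ), (θ ^ u) (s j) with hVdef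
  set M : Matrix (Fin n) (Fin k) F :=
    Matrix.of fun (j : Fin n) (i : Fin k) => v j * ∏ u ∈ range (i : ℕ), (θ ^ u) (s j)
    with hMdef
  -- injectivity of V.mulVecLin
  have hVinj : Function.Injective V.mulVecLin := by
    have hfr : Module.finrank F (Fin n → F) = n := by
      simp [Module.finrank_pi]
    have h1 : LinearMap.range V.mulVecLin = ⊤ :=
      Submodule.eq_top_of_finrank_eq (by rw [hfr]; exact hV)
    exact LinearMap.injective_iff_surjective.mpr (LinearMap.range_eq_top.mp h1)
  -- linear independence of columns
  have hsLI : LinearIndependent F (fun j : Fin n => fun i : Fin n => Nf θ (i:ℕ) (s j)) := by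
    rw [Fintype.linearIndependent_iff]
    intro g hg j
    have hmv : V.mulVecLin g = 0 := by
      funext i
      have h2 := congrFun hg i
      simp only [Finset.sum_apply, Pi.smul_apply, smul_eq_mul, Pi.zero_apply] at h2
      simp only [Matrix.mulVecLin_apply, Matrix.mulVec, dotProduct, Pi.zero_apply]
      rw [← h2]
      exact Finset.sum_congr rfl fun j' _ => by
        show V i j' * g j' = g j' * Nf θ (i:ℕ) (s j')
        rw [hVdef]
        show (∏ u ∈ range (i : ℕ), (θ ^ u) (s j')) * g j' = g j' * Nf θ (i:ℕ) (s j')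
        rw [Nf]; ring
    have h3 : g = 0 := hVinj (by rw [hmv, map_zero])
    exact congrFun h3 j
  -- coefficient extension
  set toF : (Fin k → F) → (ℕ → F) := fun x i => if h : i < k then x ⟨i, h⟩ else 0 with htoF
  have htoFsupp : ∀ x (i : ℕ), k - 1 < i → toF x i = 0 := by
    intro x i hi
    simp only [htoF]
    rw [dif_neg (by omega)]
  have hMv : ∀ (x : Fin k → F) (j : Fin n),
      M.mulVecLin x j = v j * Ev θ (toF x) n (s j) := by
    intro x j
    rw [Ev_congr θ (toF x) k n hkn (fun i hi => htoFsupp x i (by omega))]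
    simp only [Matrix.mulVecLin_apply, Matrix.mulVec, dotProduct]
    rw [Ev, ← Fin.sum_univ_eq_sum_range (fun i => toF x i * Nf θ i (s j)) k, mul_sum]
    refine Finset.sum_congr rfl fun i _ => ?_
    show M j i * x i = v j * (toF x (i:ℕ) * Nf θ (i:ℕ) (s j))
    rw [hMdef]
    show v j * (∏ u ∈ range (i : ℕ), (θ ^ u) (s j)) * x i
      = v j * (toF x (i:ℕ) * Nf θ (i:ℕ) (s j))
    have : toF x (i:ℕ) = x i := by
      simp only [htoF]
      rw [dif_pos i.isLt]
    rw [this, Nf]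
    ring
  -- bound on zeros
  have hzeros : ∀ x : Fin k → F, x ≠ 0 →
      ((univ : Finset (Fin n)).filter (fun j => Ev θ (toF x) n (s j) = 0)).card ≤ k - 1 := by
    intro x hx
    have hxne : toF x ≠ 0 := by
      obtain ⟨i, hi⟩ := Function.ne_iff.mp hx
      intro h
      apply hi
      have := congrFun h (i : ℕ)
      simp only [htoF] at this
      rwa [dif_pos i.isLt, Fin.eta, Pi.zero_apply] at this
    exact crux θ (k-1) n s (by omega) hsLI (toF x) (htoFsupp x) hxne
  have hMinj : Function.Injective M.mulVecLin := by
    rw [injective_iff_map_eq_zero]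
    intro x hx
    by_contra hxne
    have hle := hzeros x hxne
    have hall : ∀ j, Ev θ (toF x) n (s j) = 0 := by
      intro j
      have h4 := congrFun hx j
      rw [hMv x j] at h4
      exact (mul_eq_zero.mp h4).resolve_left (hv j)
    rw [Finset.filter_eq_self.mpr (fun j _ => hall j), card_univ, Fintype.card_fin] at hle
    omega
  refine ⟨by rw [LinearMap.finrank_range_of_inj hMinj]; simp [Module.finrank_pi], ?_⟩
  -- minimum weight codeword
  set sq : ℕ → F := fun j => if h : j < n then s ⟨j, h⟩ else 0 with hsq
  set fstar : ℕ → F := Pc θ sq (k-1) with hfstar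
  set xstar : Fin k → F := fun i => fstar (i:ℕ) with hxstar
  have htoFx : toF xstar = fstar := by
    funext i
    simp only [htoF, hxstar]
    by_cases h : i < k
    · rw [dif_pos h]
    · rw [dif_neg h]
      exact (Pc_supp θ sq (k-1) i (by omega)).symm
  have hxstarne : xstar ≠ 0 := by
    intro h
    have h5 : fstar (k-1) = 0 := congrFun h ⟨k-1, by omega⟩
    have h6 : (1:F) = 0 := by
      rw [← Pc_monic θ sq (k-1)]
      exact h5
    exact one_ne_zero h6
  set Z : Finset (Fin n) :=
    (univ : Finset (Fin n)).filter (fun j => Ev θ fstar n (s j) = 0) with hZ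
  have hZle : Z.card ≤ k - 1 := by
    have := hzeros xstar hxstarne
    rwa [htoFx] at this
  have hZge : k - 1 ≤ Z.card := by
    have hsubT : (univ : Finset (Fin n)).filter (fun j : Fin n => (j:ℕ) < k-1) ⊆ Z := by
      intro j hj
      rw [mem_filter] at hj
      rw [hZ, mem_filter]
      refine ⟨mem_univ _, ?_⟩
      rw [Ev_congr θ fstar (k-1+1) n (by omega)
        (fun i hi => Pc_supp θ sq (k-1) i (by omega))]
      have := Pc_vanish θ sq (k-1) (j:ℕ) hj.2
      rw [hsq] at this
      simp only [dif_pos j.isLt] at this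
      rwa [Fin.eta] at this
    have hTcard : ((univ : Finset (Fin n)).filter (fun j : Fin n => (j:ℕ) < k-1)).card
        = k - 1 := by
      have heq : (univ : Finset (Fin n)).filter (fun j : Fin n => (j:ℕ) < k-1)
          = Finset.Iio (⟨k-1, by omega⟩ : Fin n) := by
        ext j
        simp [Finset.mem_Iio, Fin.lt_def]
      rw [heq, Fin.card_Iio]
    calc k - 1 = _ := hTcard.symm
      _ ≤ Z.card := Finset.card_le_card hsubT
  have hZcard : Z.card = k - 1 := le_antisymm hZle hZge
  set cstar : Fin n → F := M.mulVecLin xstar with hcstar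
  have hczero : ∀ j, cstar j = 0 ↔ Ev θ fstar n (s j) = 0 := by
    intro j
    rw [hcstar, hMv xstar j, htoFx]
    constructor
    · intro h
      exact (mul_eq_zero.mp h).resolve_left (hv j)
    · intro h
      rw [h, mul_zero]
  have hwt : hammingNorm cstar = n - k + 1 := by
    show ((univ : Finset (Fin n)).filter (fun j => cstar j ≠ 0)).card = n - k + 1
    have : (univ : Finset (Fin n)).filter (fun j => cstar j ≠ 0) = univ \ Z := by
      rw [hZ, ← Finset.filter_not]
      exact Finset.filter_congr fun j _ => not_congr (hczero j)
    rw [this, Finset.card_sdiff_of_subset (Finset.subset_univ _), card_univ, Fintype.card_fin, hZcard]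
    omega
  have hcne : cstar ≠ 0 := by
    intro h
    have : hammingNorm cstar = 0 := by rw [h]; simp
    rw [hwt] at this
    omega
  have hmem : (n - k + 1) ∈ {w | ∃ c ∈ LinearMap.range M.mulVecLin,
      c ≠ 0 ∧ hammingNorm c = w} := ⟨cstar, ⟨xstar, rfl⟩, hcne, hwt⟩
  refine le_antisymm (Nat.sInf_le hmem) (le_csInf ⟨_, hmem⟩ ?_)
  rintro w ⟨c, ⟨x, rfl⟩, hcne', rfl⟩
  have hxne : x ≠ 0 := by
    rintro rfl
    exact hcne' (map_zero _)
  have hle := hzeros x hxne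
  have hham : hammingNorm (M.mulVecLin x)
      = n - ((univ : Finset (Fin n)).filter
          (fun j => Ev θ (toF x) n (s j) = 0)).card := by
    show ((univ : Finset (Fin n)).filter (fun j => M.mulVecLin x j ≠ 0)).card = _
    have : (univ : Finset (Fin n)).filter (fun j => M.mulVecLin x j ≠ 0)
        = univ \ ((univ : Finset (Fin n)).filter (fun j => Ev θ (toF x) n (s j) = 0)) := by
      rw [← Finset.filter_not]
      refine Finset.filter_congr fun j _ => ?_
      rw [hMv x j]
      constructor
      · intro h h2
        exact h (by rw [h2, mul_zero])
      · intro h h2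
        exact h ((mul_eq_zero.mp h2).resolve_left (hv j))
    rw [this, Finset.card_sdiff_of_subset (Finset.subset_univ _), card_univ, Fintype.card_fin]
  rw [hham]
  have hcle : ((univ : Finset (Fin n)).filter
      (fun j => Ev θ (toF x) n (s j) = 0)).card ≤ n := by
    exact le_trans (Finset.card_filter_le _ _) (by simp)
  omega
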